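/- For all positive integers n and m: ∑_{k=1}^n 1/k^m = ∑_{n ≥ k_1 ≥ ⋯ ≥ k_m ≥ 1} (-1)^{k_1+1} C(n,k_1) ∏_{j=1}^m 1/k_j. -/

import Mathlib

/-- `∑_{n ≥ k₁ ≥ ⋯ ≥ k_m ≥ 1} ∏_j 1/k_j`. -/
noncomputable def nestedInv : ℕ → ℕ → ℝ
  | _, 0 => 1
  | n, m + 1 => ∑ k ∈ Finset.Icc 1 n, (1 / (k : ℝ)) * nestedInv k m

lemma nestedInv_one : ∀ m, nestedInv 1 m = 1
  | 0 => rfl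
  | m + 1 => by
    rw [nestedInv]
    simp [nestedInv_one m]

lemma alt_sum_choose (n : ℕ) :
    ∀ j, ∑ k ∈ Finset.range (j + 1), (-1 : ℝ) ^ k * ((n + 1).choose k : ℝ)
      = (-1) ^ j * (n.choose j : ℝ)
  | 0 => by simp
  | j + 1 => by
    rw [Finset.sum_range_succ, alt_sum_choose n j, Nat.choose_succ_succ]
    push_cast
    ring

lemma tail_alt (n j : ℕ) (h : j + 1 ≤ n + 1) :
    ∑ k ∈ Finset.Icc (j + 1) (n + 1), (-1 : ℝ) ^ k * ((n + 1).choose k : ℝ)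
      = (-1) ^ (j + 1) * (n.choose j : ℝ) := by
  have h0 : ∑ k ∈ Finset.Ico 0 (j + 1), (-1 : ℝ) ^ k * ((n + 1).choose k : ℝ)
      + ∑ k ∈ Finset.Ico (j + 1) (n + 2), (-1 : ℝ) ^ k * ((n + 1).choose k : ℝ)
      = ∑ k ∈ Finset.Ico 0 (n + 2), (-1 : ℝ) ^ k * ((n + 1).choose k : ℝ) :=
    Finset.sum_Ico_consecutive _ (Nat.zero_le _) (by omega)
  have h1 := alt_sum_choose n j
  have h2 := alt_sum_choose n (n + 1)
  rw [Nat.choose_succ_self] at h2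
  simp only [← Finset.range_eq_Ico] at h0
  rw [h1, h2] at h0
  have : Finset.Icc (j + 1) (n + 1) = Finset.Ico (j + 1) (n + 2) := by
    ext x; simp [Nat.lt_succ_iff]
  rw [this]
  push_cast at h0 ⊢
  linear_combination h0

lemma key (n : ℕ) (hn : 0 < n) :
    ∀ m, ∑ k ∈ Finset.Icc 1 n, (-1 : ℝ) ^ (k + 1) * (n.choose k : ℝ) * nestedInv k m
      = 1 / (n : ℝ) ^ m := by
  obtain ⟨n', rfl⟩ := Nat.exists_eq_succ_of_ne_zero hn.ne'
  intro m
  induction m with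
  | zero =>
    have t := tail_alt n' 0 (by omega)
    simp only [nestedInv, pow_zero, mul_one]
    have e : ∑ k ∈ Finset.Icc 1 (n' + 1), (-1 : ℝ) ^ (k + 1) * ((n' + 1).choose k : ℝ)
        = -∑ k ∈ Finset.Icc (0 + 1) (n' + 1), (-1 : ℝ) ^ k * ((n' + 1).choose k : ℝ) := by
      rw [← Finset.sum_neg_distrib]
      exact Finset.sum_congr rfl fun k _ => by ring
    rw [e, t]
    norm_num
  | succ m ih =>
    have swap :
        ∑ k ∈ Finset.Icc 1 (n' + 1), ∑ j ∈ Finset.Icc 1 k,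
          (-1 : ℝ) ^ (k + 1) * ((n' + 1).choose k : ℝ) * ((1 / (j : ℝ)) * nestedInv j m)
        = ∑ j ∈ Finset.Icc 1 (n' + 1), ∑ k ∈ Finset.Icc j (n' + 1),
          (-1 : ℝ) ^ (k + 1) * ((n' + 1).choose k : ℝ) * ((1 / (j : ℝ)) * nestedInv j m) := by
      apply Finset.sum_comm'
      intro k j
      simp only [Finset.mem_Icc]
      omega
    calc ∑ k ∈ Finset.Icc 1 (n' + 1),
          (-1 : ℝ) ^ (k + 1) * ((n' + 1).choose k : ℝ) * nestedInv k (m + 1)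
        = ∑ k ∈ Finset.Icc 1 (n' + 1), ∑ j ∈ Finset.Icc 1 k,
            (-1 : ℝ) ^ (k + 1) * ((n' + 1).choose k : ℝ)
              * ((1 / (j : ℝ)) * nestedInv j m) := by
          refine Finset.sum_congr rfl fun k _ => ?_
          rw [nestedInv, Finset.mul_sum]
      _ = ∑ j ∈ Finset.Icc 1 (n' + 1), ∑ k ∈ Finset.Icc j (n' + 1),
            (-1 : ℝ) ^ (k + 1) * ((n' + 1).choose k : ℝ)
              * ((1 / (j : ℝ)) * nestedInv j m) := swap
      _ = ∑ j ∈ Finset.Icc 1 (n' + 1),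
            (-1 : ℝ) ^ (j + 1) * ((n' + 1).choose j : ℝ) * nestedInv j m
              * (1 / (n' + 1 : ℝ)) := by
          refine Finset.sum_congr rfl fun j hj => ?_
          simp only [Finset.mem_Icc] at hj
          obtain ⟨j', rfl⟩ := Nat.exists_eq_succ_of_ne_zero (by omega : j ≠ 0)
          rw [← Finset.sum_mul]
          have hs : ∑ k ∈ Finset.Icc (j' + 1) (n' + 1),
              (-1 : ℝ) ^ (k + 1) * ((n' + 1).choose k : ℝ)
              = (-1) ^ (j' + 2) * (n'.choose j' : ℝ) := by
            have t := tail_alt n' j' (by omega)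
            have e : ∑ k ∈ Finset.Icc (j' + 1) (n' + 1),
                (-1 : ℝ) ^ (k + 1) * ((n' + 1).choose k : ℝ)
                = -∑ k ∈ Finset.Icc (j' + 1) (n' + 1),
                    (-1 : ℝ) ^ k * ((n' + 1).choose k : ℝ) := by
              rw [← Finset.sum_neg_distrib]
              exact Finset.sum_congr rfl fun k _ => by ring
            rw [e, t]; ring
          have hc : ((n' + 1 : ℕ) : ℝ) * (n'.choose j' : ℝ)
              = ((n' + 1).choose (j' + 1) : ℝ) * ((j' + 1 : ℕ) : ℝ) := by
            rw [← Nat.cast_mul, ← Nat.cast_mul, Nat.add_one_mul_choose_eq]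
          have hj1 : ((j' : ℝ) + 1) ≠ 0 := by positivity
          have hn1 : ((n' : ℝ) + 1) ≠ 0 := by positivity
          push_cast at hc ⊢
          rw [hs]
          have hc' : (n'.choose j' : ℝ)
              = ((n' + 1).choose (j' + 1) : ℝ) * ((j' : ℝ) + 1) / ((n' : ℝ) + 1) := by
            rw [eq_div_iff hn1]
            linear_combination hc
          rw [hc']
          field_simp
      _ = 1 / ((n' + 1 : ℕ) : ℝ) ^ (m + 1) := by
          rw [← Finset.sum_mul, ih]
          push_cast
          field_simp
          ring

theorem karl_dual (n m : ℕ) (hn : 0 < n) (hm : 0 < m) :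
    ∑ k ∈ Finset.Icc 1 n, 1 / (k : ℝ) ^ m
    = ∑ k ∈ Finset.Icc 1 n,
        (-1 : ℝ) ^ (k + 1) * (n.choose k : ℝ) * ((1 / (k : ℝ)) * nestedInv k (m - 1)) := by
  obtain ⟨m', rfl⟩ := Nat.exists_eq_succ_of_ne_zero hm.ne'
  simp only [Nat.succ_sub_one]
  induction n with
  | zero => omega
  | succ n ihn =>
    rcases Nat.eq_zero_or_pos n with hn0 | hn0
    · subst hn0
      simp [nestedInv_one m']
    · have ihn := ihn hn0
      have key1 := key (n + 1) (by omega) m'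
      -- extend the old RHS to Icc 1 (n+1)
      have ext : ∑ k ∈ Finset.Icc 1 (n + 1),
            (-1 : ℝ) ^ (k + 1) * (n.choose k : ℝ) * ((1 / (k : ℝ)) * nestedInv k m')
          = ∑ k ∈ Finset.Icc 1 n,
            (-1 : ℝ) ^ (k + 1) * (n.choose k : ℝ) * ((1 / (k : ℝ)) * nestedInv k m') := by
        rw [Finset.sum_Icc_succ_top (by omega : 1 ≤ n + 1)]
        simp [Nat.choose_succ_self]
      have pascal : ∀ k ∈ Finset.Icc 1 (n + 1),
          (-1 : ℝ) ^ (k + 1) * ((n + 1).choose k : ℝ) * ((1 / (k : ℝ)) * nestedInv k m')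
          = (-1 : ℝ) ^ (k + 1) * (n.choose k : ℝ) * ((1 / (k : ℝ)) * nestedInv k m')
            + (-1 : ℝ) ^ (k + 1) * ((n + 1).choose k : ℝ) * nestedInv k m'
              * (1 / ((n : ℝ) + 1)) := by
        intro k hk
        simp only [Finset.mem_Icc] at hk
        obtain ⟨k', rfl⟩ := Nat.exists_eq_succ_of_ne_zero (by omega : k ≠ 0)
        have hp : (((n + 1).choose (k' + 1) : ℕ) : ℝ)
            = (n.choose k' : ℝ) + (n.choose (k' + 1) : ℝ) := by
          rw [Nat.choose_succ_succ]; push_cast; ring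
        have hc : ((n + 1 : ℕ) : ℝ) * (n.choose k' : ℝ)
            = ((n + 1).choose (k' + 1) : ℝ) * ((k' + 1 : ℕ) : ℝ) := by
          rw [← Nat.cast_mul, ← Nat.cast_mul, Nat.add_one_mul_choose_eq]
        have hk1 : ((k' : ℝ) + 1) ≠ 0 := by positivity
        have hn1 : ((n : ℝ) + 1) ≠ 0 := by positivity
        have hc' : (n.choose k' : ℝ)
            = ((n + 1).choose (k' + 1) : ℝ) * ((k' : ℝ) + 1) / ((n : ℝ) + 1) := by
          rw [eq_div_iff hn1]
          push_cast at hc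
          linear_combination hc
        push_cast at hp ⊢
        rw [hp, hc']
        push_cast at hc
        field_simp
        linear_combination (nestedInv (k' + 1) m' * ((k' : ℝ) + 1)) * hc
          + (nestedInv (k' + 1) m' * ((k' : ℝ) + 1) * ((n : ℝ) + 1)) * hp
      rw [Finset.sum_Icc_succ_top (by omega : 1 ≤ n + 1), ihn,
        Finset.sum_congr rfl pascal, Finset.sum_add_distrib, ext, ← Finset.sum_mul, key1]
      push_cast
      field_simp
      simp only [Nat.succ_eq_add_one]
      ring
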